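/- Let C > 0 and let g : [0,T] × [0,L] → ℝ be a function such that |g(t,x) - g(t,y)| ≤ C·|x - y| for all t, x, y, and such that for all t₁ < t₂ in [0,T], x ∈ [0,L], and all η with 0 < η and [x-η, x+η] ⊆ [0,L], one has (1/η)·∫_{x-η}^{x+η} |g(t₁,ξ) - g(t₂,ξ)| dξ ≤ C·|t₂ - t₁|^{1/2}·η^{-1/2}. Then there is a constant C' (depending only on C, T, L) such that |g(t₁,x) - g(t₂,x)| ≤ C'·|t₁ - t₂|^{1/3} for all t₁, t₂ ∈ [0,T] and x ∈ [0,L] with |t₁ - t₂| ≤ min(L/2, 1)³ (say), i.e. g is 1/3-Hölder continuous in time. -/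

import Mathlib

open MeasureTheory intervalIntegral Set

theorem stmt_8 (C T L : ℝ) (hC : 0 < C) (hT : 0 < T) (hL : 0 < L)
    (g : ℝ → ℝ → ℝ)
    (hLip : ∀ t ∈ Icc 0 T, ∀ x ∈ Icc 0 L, ∀ y ∈ Icc 0 L,
      |g t x - g t y| ≤ C * |x - y|)
    (hAvg : ∀ t₁ ∈ Icc 0 T, ∀ t₂ ∈ Icc 0 T, t₁ < t₂ →
      ∀ x ∈ Icc 0 L, ∀ η : ℝ, 0 < η → Icc (x - η) (x + η) ⊆ Icc 0 L →
        (1/η) * ∫ ξ in (x - η)..(x + η), |g t₁ ξ - g t₂ ξ|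
          ≤ C * |t₂ - t₁| ^ ((1:ℝ)/2) * η ^ (-(1:ℝ)/2)) :
    ∃ C' : ℝ, 0 < C' ∧ ∀ t₁ ∈ Icc 0 T, ∀ t₂ ∈ Icc 0 T, ∀ x ∈ Icc 0 L,
      |t₁ - t₂| ≤ (min (L/2) 1)^3 →
        |g t₁ x - g t₂ x| ≤ C' * |t₁ - t₂| ^ ((1:ℝ)/3) := by
  refine ⟨5*C, by positivity, ?_⟩
  have key : ∀ t₁ ∈ Icc (0:ℝ) T, ∀ t₂ ∈ Icc (0:ℝ) T, t₁ < t₂ → ∀ x ∈ Icc (0:ℝ) L,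
      t₂ - t₁ ≤ (min (L/2) 1)^3 →
      |g t₁ x - g t₂ x| ≤ 5*C * (t₂ - t₁) ^ ((1:ℝ)/3) := by
    intro t₁ ht₁ t₂ ht₂ hlt x hx hsmall
    set d := t₂ - t₁ with hd
    have hd0 : 0 < d := sub_pos.mpr hlt
    set η := d ^ ((1:ℝ)/3) with hη
    have hη0 : 0 < η := Real.rpow_pos_of_pos hd0 _
    have hm0 : 0 < min (L/2) 1 := lt_min (by linarith) one_pos
    have hηle : η ≤ min (L/2) 1 := by
      have h1 : d ^ ((1:ℝ)/3) ≤ ((min (L/2) 1)^3 : ℝ) ^ ((1:ℝ)/3) :=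
        Real.rpow_le_rpow hd0.le hsmall (by norm_num)
      calc η ≤ ((min (L/2) 1)^3 : ℝ) ^ ((1:ℝ)/3) := h1
        _ = min (L/2) 1 := by
          rw [← Real.rpow_natCast (min (L/2) 1) 3, ← Real.rpow_mul hm0.le]
          norm_num
    have hηL : η ≤ L/2 := le_trans hηle (min_le_left _ _)
    set c := max η (min x (L - η)) with hc
    have hcl : η ≤ c := le_max_left _ _
    have hcu : c ≤ L - η := max_le (by linarith) (min_le_right _ _)
    have hxc : |x - c| ≤ η := by
      rw [abs_sub_le_iff]
      constructor
      · have h1 : x - η ≤ min x (L - η) := le_min (by linarith) (by linarith [hx.2])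
        have h2 := le_max_right η (min x (L - η))
        simp only [← hc] at h2
        linarith
      · have h1 : min x (L - η) ≤ x := min_le_left _ _
        have h2 : c ≤ x + η := max_le (by linarith [hx.1]) (by linarith)
        linarith
    have hsub : Icc (c - η) (c + η) ⊆ Icc 0 L := by
      intro ξ hξ
      exact ⟨by linarith [hξ.1], by linarith [hξ.2]⟩
    have hcont : ∀ t ∈ Icc (0:ℝ) T, ContinuousOn (g t) (Icc 0 L) := by
      intro t ht
      have hl : LipschitzOnWith (Real.toNNReal C) (g t) (Icc 0 L) := by
        rw [lipschitzOnWith_iff_dist_le_mul]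
        intro a ha b hb
        simpa [Real.dist_eq, Real.coe_toNNReal C hC.le] using hLip t ht a ha b hb
      exact hl.continuousOn
    have hInt : IntervalIntegrable (fun ξ => |g t₁ ξ - g t₂ ξ|) volume (c - η) (c + η) := by
      apply ContinuousOn.intervalIntegrable
      rw [uIcc_of_le (by linarith)]
      exact (((hcont t₁ ht₁).mono hsub).sub ((hcont t₂ ht₂).mono hsub)).abs
    have hpt : ∀ ξ ∈ Icc (c - η) (c + η),
        |g t₁ x - g t₂ x| - 4*C*η ≤ |g t₁ ξ - g t₂ ξ| := by
      intro ξ hξ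
      have hξL := hsub hξ
      have h1 := hLip t₁ ht₁ x hx ξ hξL
      have h2 := hLip t₂ ht₂ ξ hξL x hx
      have hxξ : |x - ξ| ≤ 2*η := by
        have h3 : |c - ξ| ≤ η := by
          rw [abs_sub_le_iff]; constructor <;> [linarith [hξ.1]; linarith [hξ.2]]
        calc |x - ξ| = |(x - c) + (c - ξ)| := by ring_nf
          _ ≤ |x - c| + |c - ξ| := abs_add_le _ _
          _ ≤ 2*η := by linarith
      have hξx : |ξ - x| ≤ 2*η := by rw [abs_sub_comm]; exact hxξ
      have tri : |g t₁ x - g t₂ x| ≤ |g t₁ x - g t₁ ξ| + |g t₁ ξ - g t₂ ξ| + |g t₂ ξ - g t₂ x| := by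
        calc |g t₁ x - g t₂ x| ≤ |g t₁ x - g t₂ ξ| + |g t₂ ξ - g t₂ x| := abs_sub_le _ _ _
          _ ≤ (|g t₁ x - g t₁ ξ| + |g t₁ ξ - g t₂ ξ|) + |g t₂ ξ - g t₂ x| :=
              add_le_add_left (abs_sub_le _ _ _) _
      have hb1 : C * |x - ξ| ≤ C * (2*η) := mul_le_mul_of_nonneg_left hxξ hC.le
      have hb2 : C * |ξ - x| ≤ C * (2*η) := mul_le_mul_of_nonneg_left hξx hC.le
      nlinarith
    have hmono := intervalIntegral.integral_mono_on (by linarith : c - η ≤ c + η)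
      (intervalIntegrable_const) hInt hpt
    rw [intervalIntegral.integral_const, smul_eq_mul] at hmono
    have hA := hAvg t₁ ht₁ t₂ ht₂ hlt c ⟨by linarith, by linarith⟩ η hη0 hsub
    have hpow : C * |t₂ - t₁| ^ ((1:ℝ)/2) * η ^ (-(1:ℝ)/2) = C * η := by
      rw [← hd, abs_of_pos hd0, hη, ← Real.rpow_mul hd0.le, mul_assoc, ← Real.rpow_add hd0]
      norm_num
    rw [hpow] at hA
    have hI : (∫ ξ in (c - η)..(c + η), |g t₁ ξ - g t₂ ξ|) ≤ C * η * η := by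
      calc (∫ ξ in (c - η)..(c + η), |g t₁ ξ - g t₂ ξ|)
          = η * ((1/η) * ∫ ξ in (c - η)..(c + η), |g t₁ ξ - g t₂ ξ|) := by
            field_simp
        _ ≤ η * (C * η) := mul_le_mul_of_nonneg_left hA hη0.le
        _ = C * η * η := by ring
    have hfin : (c + η - (c - η)) * (|g t₁ x - g t₂ x| - 4*C*η) ≤ C * η * η :=
      le_trans hmono hI
    have : |g t₁ x - g t₂ x| ≤ 5*C*η := by
      nlinarith [mul_pos hC (mul_pos hη0 hη0), hη0]
    exact this
  intro t₁ ht₁ t₂ ht₂ x hx hts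
  rcases lt_trichotomy t₁ t₂ with h | h | h
  · have habs : |t₁ - t₂| = t₂ - t₁ := by rw [abs_sub_comm]; exact abs_of_pos (by linarith)
    rw [habs] at hts ⊢
    exact key t₁ ht₁ t₂ ht₂ h x hx hts
  · subst h
    simp [Real.zero_rpow (by norm_num : (1:ℝ)/3 ≠ 0)]
  · have habs : |t₁ - t₂| = t₁ - t₂ := abs_of_pos (by linarith)
    rw [habs] at hts ⊢
    rw [abs_sub_comm]
    exact key t₂ ht₂ t₁ ht₁ h x hx hts
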